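/- Fix λ > 0 and define T(z, β) = η_{λ‖z−β‖₂}(z) ∈ ℝᵐ for (z, β) ∈ ℝᵐ × ℝᵐ, where the soft-thresholding function η_t(x) = sign(x)·max(|x| − t, 0) is applied componentwise. Then T is Lipschitz continuous jointly in (z, β): for all (z₁, β₁), (z₂, β₂) ∈ ℝᵐ × ℝᵐ, ‖T(z₁, β₁) − T(z₂, β₂)‖₂ ≤ (2 + 2λ)√m · ‖(z₁, β₁) − (z₂, β₂)‖₂, where the norm on ℝᵐ × ℝᵐ is the Euclidean norm of the concatenated vector. -/

import Mathlib

open scoped BigOperators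

/-- Euclidean norm of a vector in `ℝᵐ`. -/
noncomputable def norm2 {m : ℕ} (v : Fin m → ℝ) : ℝ := Real.sqrt (∑ i, (v i) ^ 2)

/-- Soft-thresholding with threshold `t`: `η_t(x) = sign(x)·max(|x| − t, 0)`. -/
noncomputable def soft (t x : ℝ) : ℝ := Real.sign x * max (|x| - t) 0

lemma soft_eq (t x : ℝ) (ht : 0 ≤ t) : soft t x = x - max (min x t) (-t) := by
  unfold soft
  rcases lt_trichotomy x 0 with h|h|h
  · rw [Real.sign_of_neg h, abs_of_neg h]
    simp only [max_def, min_def]; split_ifs <;> linarith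
  · subst h; simp [min_eq_left ht, max_eq_left (neg_nonpos.mpr ht)]
  · rw [Real.sign_of_pos h, abs_of_pos h]
    simp only [max_def, min_def]; split_ifs <;> linarith

lemma soft_lip_x (t x y : ℝ) (ht : 0 ≤ t) : |soft t x - soft t y| ≤ |x - y| := by
  rw [soft_eq t x ht, soft_eq t y ht, abs_sub_le_iff]
  rcases abs_cases (x - y) with ⟨h1, h2⟩ | ⟨h1, h2⟩ <;>
    constructor <;>
    · simp only [max_def, min_def]; split_ifs <;> linarith

lemma soft_lip_t (t₁ t₂ x : ℝ) : |soft t₁ x - soft t₂ x| ≤ |t₁ - t₂| := by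
  unfold soft
  rw [← mul_sub, abs_mul]
  have h1 : |Real.sign x| ≤ 1 := by
    rcases lt_trichotomy x 0 with h|h|h <;>
      simp [Real.sign_of_neg, Real.sign_of_pos, h]
  have h2 : |max (|x| - t₁) 0 - max (|x| - t₂) 0| ≤ |t₁ - t₂| := by
    have := abs_max_sub_max_le_abs (|x| - t₁) (|x| - t₂) 0
    calc _ ≤ |(|x| - t₁) - (|x| - t₂)| := this
      _ = |t₁ - t₂| := by rw [show (|x| - t₁) - (|x| - t₂) = -(t₁ - t₂) by ring, abs_neg]
  calc |Real.sign x| * |max (|x| - t₁) 0 - max (|x| - t₂) 0| ≤ 1 * |t₁ - t₂| :=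
        mul_le_mul h1 h2 (abs_nonneg _) zero_le_one
    _ = |t₁ - t₂| := one_mul _

noncomputable def toE {m : ℕ} (v : Fin m → ℝ) : EuclideanSpace ℝ (Fin m) := WithLp.toLp 2 v

lemma norm2_eq_norm {m : ℕ} (v : Fin m → ℝ) : norm2 v = ‖toE v‖ := by
  rw [EuclideanSpace.norm_eq, norm2]
  congr 1
  exact Finset.sum_congr rfl fun i _ => (sq_abs (v i)).symm

lemma toE_sub {m : ℕ} (u v : Fin m → ℝ) : toE (u - v) = toE u - toE v := by simp [toE]

lemma norm2_nonneg {m : ℕ} (v : Fin m → ℝ) : 0 ≤ norm2 v := Real.sqrt_nonneg _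

lemma abs_norm2_sub_norm2 {m : ℕ} (u v : Fin m → ℝ) :
    |norm2 u - norm2 v| ≤ norm2 (u - v) := by
  rw [norm2_eq_norm, norm2_eq_norm, norm2_eq_norm, toE_sub]
  exact abs_norm_sub_norm_le _ _

lemma norm2_sub_le {m : ℕ} (u v : Fin m → ℝ) : norm2 (u - v) ≤ norm2 u + norm2 v := by
  rw [norm2_eq_norm, norm2_eq_norm, norm2_eq_norm, toE_sub]
  exact norm_sub_le _ _

lemma abs_le_norm2 {m : ℕ} (v : Fin m → ℝ) (i : Fin m) : |v i| ≤ norm2 v := by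
  rw [norm2, ← Real.sqrt_sq_eq_abs]
  exact Real.sqrt_le_sqrt (Finset.single_le_sum (fun j _ => sq_nonneg (v j)) (Finset.mem_univ i))

/-- For `λ > 0`, the map `(z, β) ↦ η_{λ‖z−β‖₂}(z)` is jointly Lipschitz with
constant `(2 + 2λ)√m`, where the norm on `ℝᵐ × ℝᵐ` is the Euclidean norm of
the concatenated vector. -/
theorem joint_lipschitz {m : ℕ} (lam : ℝ) (hlam : 0 < lam) :
    ∀ z₁ β₁ z₂ β₂ : Fin m → ℝ,
      norm2 ((fun i => soft (lam * norm2 (z₁ - β₁)) (z₁ i)) -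
              (fun i => soft (lam * norm2 (z₂ - β₂)) (z₂ i))) ≤
        (2 + 2 * lam) * Real.sqrt m *
          Real.sqrt ((norm2 (z₁ - z₂)) ^ 2 + (norm2 (β₁ - β₂)) ^ 2) := by
  intro z₁ β₁ z₂ β₂
  set t₁ := lam * norm2 (z₁ - β₁) with ht₁
  set t₂ := lam * norm2 (z₂ - β₂) with ht₂
  set a := norm2 (z₁ - z₂) with ha'
  set b := norm2 (β₁ - β₂) with hb'
  have ha : 0 ≤ a := norm2_nonneg _
  have hb : 0 ≤ b := norm2_nonneg _
  have ht₁0 : 0 ≤ t₁ := mul_nonneg hlam.le (norm2_nonneg _)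
  -- bound on the threshold difference
  have hts : |t₁ - t₂| ≤ lam * (a + b) := by
    rw [ht₁, ht₂, ← mul_sub, abs_mul, abs_of_pos hlam]
    have h1 : |norm2 (z₁ - β₁) - norm2 (z₂ - β₂)| ≤ norm2 ((z₁ - β₁) - (z₂ - β₂)) :=
      abs_norm2_sub_norm2 _ _
    have h2 : (z₁ - β₁) - (z₂ - β₂) = (z₁ - z₂) - (β₁ - β₂) := sub_sub_sub_comm z₁ β₁ z₂ β₂
    have h3 : norm2 ((z₁ - β₁) - (z₂ - β₂)) ≤ a + b := by
      rw [h2]; exact norm2_sub_le _ _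
    exact mul_le_mul_of_nonneg_left (h1.trans h3) hlam.le
  set C := (1 + lam) * (a + b) with hC'
  have hC : 0 ≤ C := by positivity
  -- componentwise bound
  have hcomp : ∀ i, |soft t₁ (z₁ i) - soft t₂ (z₂ i)| ≤ C := by
    intro i
    have h1 : |soft t₁ (z₁ i) - soft t₂ (z₂ i)| ≤
        |soft t₁ (z₁ i) - soft t₁ (z₂ i)| + |soft t₁ (z₂ i) - soft t₂ (z₂ i)| :=
      abs_sub_le _ _ _
    have h2 : |soft t₁ (z₁ i) - soft t₁ (z₂ i)| ≤ |z₁ i - z₂ i| := soft_lip_x t₁ _ _ ht₁0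
    have h3 : |soft t₁ (z₂ i) - soft t₂ (z₂ i)| ≤ |t₁ - t₂| := soft_lip_t t₁ t₂ _
    have h4 : |z₁ i - z₂ i| ≤ a := abs_le_norm2 (z₁ - z₂) i
    have := h1.trans (add_le_add (h2.trans h4) (h3.trans hts))
    nlinarith [this]
  -- bound the norm by √m · C
  have hnorm : norm2 ((fun i => soft t₁ (z₁ i)) - (fun i => soft t₂ (z₂ i))) ≤
      Real.sqrt m * C := by
    rw [norm2]
    have hsum : ∑ i, (((fun i => soft t₁ (z₁ i)) - (fun i => soft t₂ (z₂ i))) i) ^ 2 ≤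
        ∑ _i : Fin m, C ^ 2 := by
      refine Finset.sum_le_sum fun i _ => ?_
      have := hcomp i
      have h : (soft t₁ (z₁ i) - soft t₂ (z₂ i)) ^ 2 ≤ C ^ 2 := by
        rw [← sq_abs]
        exact pow_le_pow_left₀ (abs_nonneg _) this 2
      simpa using h
    calc Real.sqrt (∑ i, (((fun i => soft t₁ (z₁ i)) - (fun i => soft t₂ (z₂ i))) i) ^ 2)
        ≤ Real.sqrt (∑ _i : Fin m, C ^ 2) := Real.sqrt_le_sqrt hsum
      _ = Real.sqrt ((m : ℝ) * C ^ 2) := by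
          rw [Finset.sum_const, Finset.card_univ, Fintype.card_fin, nsmul_eq_mul]
      _ = Real.sqrt m * C := by
          rw [Real.sqrt_mul (Nat.cast_nonneg m), Real.sqrt_sq hC]
  refine hnorm.trans ?_
  -- final comparison
  set s := Real.sqrt (a ^ 2 + b ^ 2) with hs'
  have hs0 : 0 ≤ s := Real.sqrt_nonneg _
  have hs2 : s ^ 2 = a ^ 2 + b ^ 2 := Real.sq_sqrt (by positivity)
  have hab : a + b ≤ 2 * s := by nlinarith [sq_nonneg (a - b), sq_nonneg (a + b - 2 * s)]
  have hCle : C ≤ (2 + 2 * lam) * s := by nlinarith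
  calc Real.sqrt m * C ≤ Real.sqrt m * ((2 + 2 * lam) * s) :=
        mul_le_mul_of_nonneg_left hCle (Real.sqrt_nonneg m)
    _ = (2 + 2 * lam) * Real.sqrt m * s := by ring
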